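/- (Unified deterministic inequality for CSMD.) Suppose Assumptions 2 and 3 hold, the step sizes satisfy η_t ≤ 1/max(2L, μ_f) for all t ∈ [T], and define γ_t := η_t ∏_{s=2}^t (1+μ_h η_{s−1})/(1−μ_f η_s). Let w_1 ≥ w_2 ≥ ⋯ ≥ w_T ≥ 0 be a non-increasing sequence, let v_t := w_T γ_T / (Σ_{s=max(t,1)}^T w_s γ_s) > 0 for t ∈ {0}∪[T], and for any fixed x ∈ 𝒳 let z^t := (v_0/v_t)·x + Σ_{s=1}^t ((v_s − v_{s−1})/v_t)·x^s. Then for every realization of ĝ^1,…,ĝ^T (with g^t ∈ ∂f(x^t) the conditional mean and ξ^t = ĝ^t − g^t): w_T γ_T v_T (F(x^{T+1}) − F(x)) ≤ w_1 (1 − μ_f η_1) v_0 D_ψ(x, x^1) + Σ_{t=1}^T 2 w_t γ_t η_t v_t (M² + ‖ξ^t‖_*²) + Σ_{t=1}^T w_t γ_t v_{t−1} ⟨ξ^t, z^{t−1} − x^t⟩ + Σ_{t=2}^T (w_t − w_{t−1}) γ_t (η_t^{−1} − μ_f) v_{t−1} D_ψ(z^{t−1}, x^t). -/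

import Mathlib

open MeasureTheory Real
open scoped RealInnerProductSpace BigOperators

/-- The dual norm of a general norm `nrm` on `ℝ^d`. -/
noncomputable def dualNorm {d : ℕ} (nrm : EuclideanSpace ℝ (Fin d) → ℝ) (g : EuclideanSpace ℝ (Fin d)) : ℝ :=
  sSup {r : ℝ | ∃ x, nrm x ≤ 1 ∧ r = ⟪g, x⟫}

/-- The subdifferential of `φ` at `y`, relative to the domain `X`. -/
def subgrad {d : ℕ} (X : Set (EuclideanSpace ℝ (Fin d))) (φ : EuclideanSpace ℝ (Fin d) → ℝ) (y : EuclideanSpace ℝ (Fin d)) : Set (EuclideanSpace ℝ (Fin d)) :=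
  {g | ∀ x ∈ X, φ y + ⟪g, x - y⟫ ≤ φ x}

/-- The Bregman divergence associated with `ψ`, whose gradient is `gψ`. -/
noncomputable def breg {d : ℕ} (ψ : EuclideanSpace ℝ (Fin d) → ℝ) (gψ : EuclideanSpace ℝ (Fin d) → EuclideanSpace ℝ (Fin d)) (x y : EuclideanSpace ℝ (Fin d)) : ℝ :=
  ψ x - ψ y - ⟪gψ y, x - y⟫

/-- The σ-algebra `σ(ĝ^1, …, ĝ^t)` generated by the first `t` stochastic gradients. -/
noncomputable def natFilt {Ω : Type*} {d : ℕ}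
    (ghat : ℕ → Ω → EuclideanSpace ℝ (Fin d)) (t : ℕ) : MeasurableSpace Ω :=
  ⨆ s ∈ Finset.Icc 1 t, MeasurableSpace.comap (ghat s) inferInstance

open Filter
open scoped Topology

section NrmFacts
variable {d : ℕ} (nrm : EuclideanSpace ℝ (Fin d) → ℝ)
  (hnrm_nonneg : ∀ x, 0 ≤ nrm x)
  (hnrm_zero : ∀ x, nrm x = 0 ↔ x = 0)
  (hnrm_smul : ∀ (c : ℝ) (x : EuclideanSpace ℝ (Fin d)), nrm (c • x) = |c| * nrm x)
  (hnrm_tri : ∀ x y, nrm (x + y) ≤ nrm x + nrm y)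

include hnrm_nonneg hnrm_smul hnrm_tri in
lemma nrm_continuous : Continuous nrm := by
  -- nrm x ≤ C * ||x||
  classical
  set C : ℝ := ∑ i : Fin d, nrm (EuclideanSpace.single i 1) with hC
  have hle : ∀ x : EuclideanSpace ℝ (Fin d), nrm x ≤ C * ‖x‖ := by
    intro x
    have hdec : x = ∑ i : Fin d, x i • EuclideanSpace.single i (1:ℝ) := by
      have hb := (EuclideanSpace.basisFun (Fin d) ℝ).sum_repr x
      simp only [EuclideanSpace.basisFun_repr, EuclideanSpace.basisFun_apply] at hb
      exact hb.symm
    calc nrm x = nrm (∑ i : Fin d, x i • EuclideanSpace.single i (1:ℝ)) := by rw [← hdec]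
      _ ≤ ∑ i : Fin d, nrm (x i • EuclideanSpace.single i (1:ℝ)) := by
          refine Finset.le_sum_of_subadditive nrm ?_ ?_ _ _
          · have := hnrm_smul 0 0; exact (by simpa using this : nrm 0 = 0).le
          · exact hnrm_tri
      _ = ∑ i : Fin d, |x i| * nrm (EuclideanSpace.single i (1:ℝ)) := by
          simp [hnrm_smul]
      _ ≤ ∑ i : Fin d, ‖x‖ * nrm (EuclideanSpace.single i (1:ℝ)) := by
          refine Finset.sum_le_sum ?_
          intro i _
          have h1 : |x i| ≤ ‖x‖ := by
            rw [EuclideanSpace.norm_eq]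
            have hs := Finset.single_le_sum (f := fun j => ‖x j‖ ^ 2)
              (fun j _ => sq_nonneg ‖x j‖) (Finset.mem_univ i)
            calc |x i| = Real.sqrt (‖x i‖ ^ 2) := by
                  rw [Real.sqrt_sq_eq_abs]; simp [Real.norm_eq_abs]
              _ ≤ Real.sqrt (∑ j : Fin d, ‖x j‖ ^ 2) := Real.sqrt_le_sqrt hs
          have h2 : 0 ≤ nrm (EuclideanSpace.single i (1:ℝ)) := hnrm_nonneg _
          nlinarith
      _ = C * ‖x‖ := by rw [hC, Finset.sum_mul]; congr 1; ext i; ring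
  have hlip : LipschitzWith (Real.toNNReal C) nrm := by
    have hCnn : 0 ≤ C := Finset.sum_nonneg (fun i _ => hnrm_nonneg _)
    refine LipschitzWith.of_dist_le_mul ?_
    intro a b
    have htri1 : nrm a - nrm b ≤ nrm (a - b) := by
      have := hnrm_tri (a - b) b; simpa using this
    have htri2 : nrm b - nrm a ≤ nrm (a - b) := by
      have := hnrm_tri (b - a) a
      have hneg : nrm (b - a) = nrm (a - b) := by
        have := hnrm_smul (-1) (a - b); simpa [neg_sub] using this
      rw [hneg] at this
      simpa using this
    have : |nrm a - nrm b| ≤ nrm (a - b) := abs_sub_le_iff.2 ⟨htri1, htri2⟩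
    calc dist (nrm a) (nrm b) = |nrm a - nrm b| := rfl
      _ ≤ nrm (a - b) := this
      _ ≤ C * ‖a - b‖ := hle _
      _ = (Real.toNNReal C) * dist a b := by
          rw [Real.coe_toNNReal C hCnn, dist_eq_norm]
  exact hlip.continuous

include hnrm_nonneg hnrm_zero hnrm_smul hnrm_tri in
lemma nrm_lower : ∃ m : ℝ, 0 < m ∧ ∀ x : EuclideanSpace ℝ (Fin d), m * ‖x‖ ≤ nrm x := by
  classical
  by_cases hd : ∃ x : EuclideanSpace ℝ (Fin d), x ≠ 0
  · obtain ⟨x₀, hx₀⟩ := hd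
    have hsph : (Metric.sphere (0 : EuclideanSpace ℝ (Fin d)) 1).Nonempty :=
      ⟨‖x₀‖⁻¹ • x₀, by simp [norm_smul, abs_of_nonneg, inv_mul_cancel₀ (norm_ne_zero_iff.2 hx₀)]⟩
    obtain ⟨y, hy, hymin⟩ := (isCompact_sphere (0 : EuclideanSpace ℝ (Fin d)) 1).exists_isMinOn
      hsph ((nrm_continuous nrm hnrm_nonneg hnrm_smul hnrm_tri).continuousOn)
    have hy1 : ‖y‖ = 1 := by simpa using hy
    have hyne : y ≠ 0 := by intro hc; rw [hc] at hy1; simp at hy1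
    have hm : 0 < nrm y := lt_of_le_of_ne (hnrm_nonneg y) (fun hc => hyne ((hnrm_zero y).1 hc.symm))
    refine ⟨nrm y, hm, ?_⟩
    intro x
    by_cases hx : x = 0
    · simp [hx, (hnrm_zero (0:EuclideanSpace ℝ (Fin d))).2 rfl, hnrm_nonneg]
    · have hxn : (0:ℝ) < ‖x‖ := norm_pos_iff.2 hx
      have hmem : ‖x‖⁻¹ • x ∈ Metric.sphere (0 : EuclideanSpace ℝ (Fin d)) 1 := by
        simp [norm_smul, abs_of_nonneg (le_of_lt (inv_pos.2 hxn)), inv_mul_cancel₀ (ne_of_gt hxn)]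
      have := hymin hmem
      have h2 : nrm (‖x‖⁻¹ • x) = ‖x‖⁻¹ * nrm x := by
        rw [hnrm_smul, abs_of_nonneg (le_of_lt (inv_pos.2 hxn))]
      simp only [Set.mem_setOf_eq, h2] at this
      calc nrm y * ‖x‖ ≤ (‖x‖⁻¹ * nrm x) * ‖x‖ := by
            apply mul_le_mul_of_nonneg_right _ (le_of_lt hxn); exact this
        _ = nrm x := by field_simp
  · refine ⟨1, one_pos, ?_⟩
    intro x
    push_neg at hd
    simp [hd x, (hnrm_zero (0:EuclideanSpace ℝ (Fin d))).2 rfl]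

include hnrm_nonneg hnrm_zero hnrm_smul hnrm_tri in
lemma dualNorm_bddAbove (g : EuclideanSpace ℝ (Fin d)) :
    BddAbove {r : ℝ | ∃ x, nrm x ≤ 1 ∧ r = ⟪g, x⟫} := by
  obtain ⟨m, hm, hml⟩ := nrm_lower nrm hnrm_nonneg hnrm_zero hnrm_smul hnrm_tri
  refine ⟨‖g‖ * m⁻¹, ?_⟩
  rintro r ⟨x, hx1, rfl⟩
  have h1 : ⟪g, x⟫ ≤ ‖g‖ * ‖x‖ := real_inner_le_norm g x
  have hm1 : m * ‖x‖ ≤ 1 := le_trans (hml x) hx1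
  have h2 : ‖x‖ ≤ m⁻¹ := by
    rw [← mul_le_mul_iff_right₀ hm]
    calc m * ‖x‖ ≤ 1 := hm1
      _ = m * m⁻¹ := by field_simp
  nlinarith [norm_nonneg g]

include hnrm_nonneg hnrm_zero hnrm_smul hnrm_tri in
lemma dualNorm_nonneg (g : EuclideanSpace ℝ (Fin d)) : 0 ≤ dualNorm nrm g := by
  have h0 : (0:ℝ) ∈ {r : ℝ | ∃ x, nrm x ≤ 1 ∧ r = ⟪g, x⟫} :=
    ⟨0, by rw [(hnrm_zero 0).2 rfl]; norm_num, by simp⟩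
  exact le_csSup (dualNorm_bddAbove nrm hnrm_nonneg hnrm_zero hnrm_smul hnrm_tri g) h0

include hnrm_nonneg hnrm_zero hnrm_smul hnrm_tri in
lemma inner_le_dualNorm (g y : EuclideanSpace ℝ (Fin d)) :
    ⟪g, y⟫ ≤ dualNorm nrm g * nrm y := by
  by_cases hy : y = 0
  · simp [hy, (hnrm_zero 0).2 rfl]
  · have hny : 0 < nrm y :=
      lt_of_le_of_ne (hnrm_nonneg y) (fun hc => hy ((hnrm_zero y).1 hc.symm))
    have hmem : ⟪g, (nrm y)⁻¹ • y⟫ ∈ {r : ℝ | ∃ x, nrm x ≤ 1 ∧ r = ⟪g, x⟫} := by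
      refine ⟨(nrm y)⁻¹ • y, ?_, rfl⟩
      rw [hnrm_smul, abs_of_nonneg (le_of_lt (inv_pos.2 hny)), inv_mul_cancel₀ (ne_of_gt hny)]
    have := le_csSup (dualNorm_bddAbove nrm hnrm_nonneg hnrm_zero hnrm_smul hnrm_tri g) hmem
    rw [real_inner_smul_right] at this
    calc ⟪g, y⟫ = ((nrm y)⁻¹ * ⟪g, y⟫) * nrm y := by field_simp
      _ ≤ dualNorm nrm g * nrm y := mul_le_mul_of_nonneg_right this (le_of_lt hny)

end NrmFacts

section Prox
variable {d : ℕ} {X : Set (EuclideanSpace ℝ (Fin d))} (hXcv : Convex ℝ X)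
  {h : EuclideanSpace ℝ (Fin d) → ℝ} (hh_cv : ConvexOn ℝ Set.univ h)
  {ψ : EuclideanSpace ℝ (Fin d) → ℝ} {gψ : EuclideanSpace ℝ (Fin d) → EuclideanSpace ℝ (Fin d)}

/-- directional derivative of ψ along a line. -/
lemma psi_line_deriv (hψ_diff : ∀ y, HasGradientAt ψ (gψ y) y)
    (p w : EuclideanSpace ℝ (Fin d)) :
    Tendsto (fun lam : ℝ => (ψ (p + lam • w) - ψ p) / lam) (𝓝[>] (0:ℝ)) (𝓝 ⟪gψ p, w⟫) := by
  have hline : HasDerivAt (fun t : ℝ => p + t • w) w 0 := by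
    have h1 : HasDerivAt (fun t : ℝ => t • w) ((1:ℝ) • w) 0 := (hasDerivAt_id 0).smul_const w
    rw [one_smul] at h1
    exact h1.const_add p
  have hF : HasFDerivAt ψ (InnerProductSpace.toDual ℝ _ (gψ p)) p := (hψ_diff p).hasFDerivAt
  have hF' : HasFDerivAt ψ (InnerProductSpace.toDual ℝ _ (gψ p)) ((fun t : ℝ => p + t • w) 0) := by
    simpa using hF
  have hcomp : HasDerivAt (fun t : ℝ => ψ (p + t • w)) ⟪gψ p, w⟫ 0 := by
    have := hF'.comp_hasDerivAt 0 hline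
    simp only [InnerProductSpace.toDual_apply_apply] at this
    exact this
  have hslope := hasDerivAt_iff_tendsto_slope.1 hcomp
  have hmono : 𝓝[>] (0:ℝ) ≤ 𝓝[≠] (0:ℝ) :=
    nhdsWithin_mono 0 (fun y hy => ne_of_gt hy)
  have h2 := hslope.mono_left hmono
  refine h2.congr' ?_
  filter_upwards [self_mem_nhdsWithin] with lam hlam
  simp [slope, div_eq_inv_mul]

include hXcv hh_cv in
/-- The prox-step optimality yields an explicit subgradient of h at the minimizer. -/
lemma prox_subgrad (hψ_diff : ∀ y, HasGradientAt ψ (gψ y) y)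
    (ghat xb xp : EuclideanSpace ℝ (Fin d)) (η : ℝ) (hη : 0 < η)
    (hxp : xp ∈ X)
    (hmin : IsMinOn (fun u => h u + ⟪ghat, u - xb⟫ + breg ψ gψ u xb / η) X xp) :
    -(ghat + η⁻¹ • (gψ xp - gψ xb)) ∈ subgrad X h xp := by
  intro u hu
  set w := u - xp with hw
  set A : ℝ := (h u - h xp) + ⟪ghat, w⟫ - ⟪gψ xb, w⟫ / η with hA
  have key : ∀ lam : ℝ, lam ∈ Set.Ioo (0:ℝ) 1 →
      0 ≤ A + ((ψ (xp + lam • w) - ψ xp) / lam) / η := by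
    rintro lam ⟨hl0, hl1⟩
    have hmem : xp + lam • w ∈ X := by
      have heq : xp + lam • w = (1 - lam) • xp + lam • u := by
        rw [hw]; module
      rw [heq]
      exact hXcv hxp hu (by linarith) (le_of_lt hl0) (by ring)
    have hq := hmin hmem
    simp only [Set.mem_setOf_eq] at hq
    have hconv : h (xp + lam • w) ≤ (1 - lam) * h xp + lam * h u := by
      have heq : xp + lam • w = (1 - lam) • xp + lam • u := by rw [hw]; module
      rw [heq]
      have := hh_cv.2 (Set.mem_univ xp) (Set.mem_univ u) (by linarith : (0:ℝ) ≤ 1 - lam)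
        (le_of_lt hl0) (by ring)
      simpa [smul_eq_mul] using this
    have hin1 : ⟪ghat, xp + lam • w - xb⟫ = ⟪ghat, xp - xb⟫ + lam * ⟪ghat, w⟫ := by
      have heq : xp + lam • w - xb = (xp - xb) + lam • w := by module
      rw [heq, inner_add_right, real_inner_smul_right]
    have hin2 : ⟪gψ xb, xp + lam • w - xb⟫ = ⟪gψ xb, xp - xb⟫ + lam * ⟪gψ xb, w⟫ := by
      have heq : xp + lam • w - xb = (xp - xb) + lam • w := by module
      rw [heq, inner_add_right, real_inner_smul_right]
    simp only [breg] at hq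
    rw [hin1, hin2] at hq
    have hstep : 0 ≤ lam * (h u - h xp) + lam * ⟪ghat, w⟫ +
        (ψ (xp + lam • w) - ψ xp - lam * ⟪gψ xb, w⟫) / η := by
      have hdd : (ψ (xp + lam • w) - ψ xb - (⟪gψ xb, xp - xb⟫ + lam * ⟪gψ xb, w⟫)) / η
          - (ψ xp - ψ xb - ⟪gψ xb, xp - xb⟫) / η
          = (ψ (xp + lam • w) - ψ xp - lam * ⟪gψ xb, w⟫) / η := by
        rw [div_sub_div_same]; ring_nf
      linarith [hq, hconv, hdd]
    have hmul : lam * (A + ((ψ (xp + lam • w) - ψ xp) / lam) / η)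
        = lam * (h u - h xp) + lam * ⟪ghat, w⟫ +
          (ψ (xp + lam • w) - ψ xp - lam * ⟪gψ xb, w⟫) / η := by
      rw [hA]; field_simp; ring
    have : 0 ≤ lam * (A + ((ψ (xp + lam • w) - ψ xp) / lam) / η) := by
      rw [hmul]; exact hstep
    exact (mul_nonneg_iff_of_pos_left hl0).1 this
  have hlim : Tendsto (fun lam : ℝ => A + ((ψ (xp + lam • w) - ψ xp) / lam) / η)
      (𝓝[>] (0:ℝ)) (𝓝 (A + ⟪gψ xp, w⟫ / η)) :=
    (((psi_line_deriv hψ_diff xp w).div_const η).const_add A)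
  have hfinal : 0 ≤ A + ⟪gψ xp, w⟫ / η := by
    refine ge_of_tendsto hlim ?_
    filter_upwards [Ioo_mem_nhdsGT_of_mem (Set.mem_Ico.2 ⟨le_refl 0, zero_lt_one⟩)] with lam hlam
    exact key lam hlam
  have hinner : ⟪-(ghat + η⁻¹ • (gψ xp - gψ xb)), u - xp⟫
      = -(⟪ghat, w⟫ + η⁻¹ * (⟪gψ xp, w⟫ - ⟪gψ xb, w⟫)) := by
    rw [← hw, inner_neg_left, inner_add_left, real_inner_smul_left, inner_sub_left]
  rw [hinner, hA] at *
  have hη' : η ≠ 0 := ne_of_gt hη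
  rw [hA] at hfinal
  have : η⁻¹ * (⟪gψ xp, w⟫ - ⟪gψ xb, w⟫) = ⟪gψ xp, w⟫ / η - ⟪gψ xb, w⟫ / η := by
    field_simp
  linarith [hfinal, this.ge, this.le]

end Prox

section Step
variable {d : ℕ} {X : Set (EuclideanSpace ℝ (Fin d))} (hXcv : Convex ℝ X)
  {h f : EuclideanSpace ℝ (Fin d) → ℝ} (hh_cv : ConvexOn ℝ Set.univ h)
  {ψ : EuclideanSpace ℝ (Fin d) → ℝ} {gψ : EuclideanSpace ℝ (Fin d) → EuclideanSpace ℝ (Fin d)}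
  {μf μh : ℝ}

include hXcv hh_cv in
lemma prox_three_point (hψ_diff : ∀ y, HasGradientAt ψ (gψ y) y)
    (hh_sc : ∀ x ∈ X, ∀ y ∈ X, ∀ g ∈ subgrad X h y,
      μh * breg ψ gψ x y ≤ h x - h y - ⟪g, x - y⟫)
    (ghat xb xp : EuclideanSpace ℝ (Fin d)) (η : ℝ) (hη : 0 < η)
    (hxp : xp ∈ X)
    (hmin : IsMinOn (fun u => h u + ⟪ghat, u - xb⟫ + breg ψ gψ u xb / η) X xp)
    (u : EuclideanSpace ℝ (Fin d)) (hu : u ∈ X) :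
    h xp + ⟪ghat, xp - xb⟫ + η⁻¹ * breg ψ gψ xp xb + (μh + η⁻¹) * breg ψ gψ u xp
      ≤ h u + ⟪ghat, u - xb⟫ + η⁻¹ * breg ψ gψ u xb := by
  have hp := prox_subgrad hXcv hh_cv hψ_diff ghat xb xp η hη hxp hmin
  have hsc := hh_sc u hu xp hxp _ hp
  have hinner : ⟪-(ghat + η⁻¹ • (gψ xp - gψ xb)), u - xp⟫
      = -(⟪ghat, u - xp⟫ + η⁻¹ * (⟪gψ xp, u - xp⟫ - ⟪gψ xb, u - xp⟫)) := by
    rw [inner_neg_left, inner_add_left, real_inner_smul_left, inner_sub_left]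
  rw [hinner] at hsc
  -- three-point identity
  have h3pt : breg ψ gψ u xb - breg ψ gψ xp xb - breg ψ gψ u xp
      = ⟪gψ xp, u - xp⟫ - ⟪gψ xb, u - xp⟫ := by
    simp only [breg]
    have e1 : ⟪gψ xb, u - xb⟫ = ⟪gψ xb, u - xp⟫ + ⟪gψ xb, xp - xb⟫ := by
      rw [← inner_add_right]; congr 1; module
    rw [e1]; ring
  have hg1 : ⟪ghat, u - xp⟫ = ⟪ghat, u - xb⟫ - ⟪ghat, xp - xb⟫ := by
    rw [← inner_sub_right]; congr 1; module
  rw [hg1] at hsc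
  have hexp : η⁻¹ * (⟪gψ xp, u - xp⟫ - ⟪gψ xb, u - xp⟫)
      = η⁻¹ * breg ψ gψ u xb - η⁻¹ * breg ψ gψ xp xb - η⁻¹ * breg ψ gψ u xp := by
    rw [← h3pt]; ring
  rw [hexp] at hsc
  linarith [hsc]

include hXcv hh_cv in
lemma per_step
    (nrm : EuclideanSpace ℝ (Fin d) → ℝ)
    (hnrm_nonneg : ∀ x, 0 ≤ nrm x)
    (hnrm_zero : ∀ x, nrm x = 0 ↔ x = 0)
    (hnrm_smul : ∀ (c : ℝ) (x : EuclideanSpace ℝ (Fin d)), nrm (c • x) = |c| * nrm x)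
    (hnrm_tri : ∀ x y, nrm (x + y) ≤ nrm x + nrm y)
    (hψ_diff : ∀ y, HasGradientAt ψ (gψ y) y)
    (hψ_sc : ∀ x ∈ X, ∀ y ∈ X, 1 / 2 * nrm (x - y) ^ 2 ≤ breg ψ gψ x y)
    (hf_sc : ∀ x ∈ X, ∀ y ∈ X, ∀ g ∈ subgrad X f y,
      μf * breg ψ gψ x y ≤ f x - f y - ⟪g, x - y⟫)
    (hh_sc : ∀ x ∈ X, ∀ y ∈ X, ∀ g ∈ subgrad X h y,
      μh * breg ψ gψ x y ≤ h x - h y - ⟪g, x - y⟫)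
    (L M : ℝ) (hM : 0 ≤ M)
    (hsmooth : ∀ x ∈ X, ∀ y ∈ X, ∀ g ∈ subgrad X f y,
      f x - f y - ⟪g, x - y⟫ ≤ L / 2 * nrm (x - y) ^ 2 + M * nrm (x - y))
    (ghat g xb xp : EuclideanSpace ℝ (Fin d)) (η : ℝ) (hη : 0 < η)
    (hLη : 2 * L * η ≤ 1)
    (hxb : xb ∈ X) (hxp : xp ∈ X) (hg : g ∈ subgrad X f xb)
    (hmin : IsMinOn (fun u => h u + ⟪ghat, u - xb⟫ + breg ψ gψ u xb / η) X xp)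
    (u : EuclideanSpace ℝ (Fin d)) (hu : u ∈ X) :
    f xp + h xp - (f u + h u) ≤
      (η⁻¹ - μf) * breg ψ gψ u xb - (η⁻¹ + μh) * breg ψ gψ u xp
      + 2 * η * (M ^ 2 + dualNorm nrm (ghat - g) ^ 2) + ⟪ghat - g, u - xb⟫ := by
  set n := nrm (xp - xb) with hn
  set s := dualNorm nrm (ghat - g) with hs
  have hs0 : 0 ≤ s := dualNorm_nonneg nrm hnrm_nonneg hnrm_zero hnrm_smul hnrm_tri _
  have hn0 : 0 ≤ n := hnrm_nonneg _
  have h3 := prox_three_point hXcv hh_cv hψ_diff hh_sc ghat xb xp η hη hxp hmin u hu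
  have h2 := hsmooth xp hxp xb hxb g hg
  have h1 := hf_sc u hu xb hxb g hg
  have hnn : nrm (xb - xp) = n := by
    rw [hn]
    have : xb - xp = (-1 : ℝ) • (xp - xb) := by module
    rw [this, hnrm_smul]; norm_num
  have hxi : ⟪ghat - g, xb - xp⟫ ≤ s * n := by
    have := inner_le_dualNorm nrm hnrm_nonneg hnrm_zero hnrm_smul hnrm_tri (ghat - g) (xb - xp)
    rwa [hnn] at this
  have hD : η⁻¹ * (1 / 2 * n ^ 2) ≤ η⁻¹ * breg ψ gψ xp xb :=
    mul_le_mul_of_nonneg_left (hψ_sc xp hxp xb hxb) (le_of_lt (inv_pos.2 hη))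
  have hswap : ⟪ghat - g, xb - xp⟫ = ⟪g, xp - xb⟫ - ⟪ghat, xp - xb⟫ := by
    simp only [inner_sub_left, inner_sub_right]; ring
  have hsplit : ⟪ghat, u - xb⟫ - ⟪g, u - xb⟫ = ⟪ghat - g, u - xb⟫ := by
    rw [inner_sub_left]
  -- Young-type inequality
  have hyoung : L / 2 * n ^ 2 + M * n + s * n - η⁻¹ * (1 / 2 * n ^ 2)
      ≤ 2 * η * (M ^ 2 + s ^ 2) := by
    have h4 : (0:ℝ) < 4 * η := by linarith
    have hkey : 4 * η * (L / 2 * n ^ 2 + M * n + s * n - η⁻¹ * (1 / 2 * n ^ 2))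
        ≤ 4 * η * (2 * η * (M ^ 2 + s ^ 2)) := by
      have e : 4 * η * (η⁻¹ * (1 / 2 * n ^ 2)) = 2 * n ^ 2 := by
        field_simp; ring
      have expand : 4 * η * (L / 2 * n ^ 2 + M * n + s * n - η⁻¹ * (1 / 2 * n ^ 2))
          = 4 * η * (L / 2 * n ^ 2 + M * n + s * n) - 2 * n ^ 2 := by
        rw [mul_sub, e]
      rw [expand]
      nlinarith [sq_nonneg (2 * η * (M + s) - n), sq_nonneg (M - s), sq_nonneg n,
        mul_pos hη hη, hLη, hη.le, mul_nonneg (mul_nonneg hη.le hn0) hn0]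
    exact le_of_mul_le_mul_left hkey h4
  linarith [h1, h2, h3, hxi, hD, hyoung, hswap.le, hswap.ge, hsplit.le, hsplit.ge]

end Step

set_option maxHeartbeats 1000000

/-- Lemma 2 (unified deterministic inequality for CSMD). -/
theorem csmd_unified_deterministic
    {d : ℕ}
    (X : Set (EuclideanSpace ℝ (Fin d))) (hXne : X.Nonempty) (hXcl : IsClosed X) (hXcv : Convex ℝ X)
    (nrm : EuclideanSpace ℝ (Fin d) → ℝ)
    (hnrm_nonneg : ∀ x, 0 ≤ nrm x)
    (hnrm_zero : ∀ x, nrm x = 0 ↔ x = 0)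
    (hnrm_smul : ∀ (c : ℝ) (x : EuclideanSpace ℝ (Fin d)), nrm (c • x) = |c| * nrm x)
    (hnrm_tri : ∀ x y, nrm (x + y) ≤ nrm x + nrm y)
    (f h : EuclideanSpace ℝ (Fin d) → ℝ)
    (hf_cv : ConvexOn ℝ Set.univ f) (hh_cv : ConvexOn ℝ Set.univ h)
    (ψ : EuclideanSpace ℝ (Fin d) → ℝ) (gψ : EuclideanSpace ℝ (Fin d) → EuclideanSpace ℝ (Fin d))
    (hψ_diff : ∀ y, HasGradientAt ψ (gψ y) y)
    (hψ_sc : ∀ x ∈ X, ∀ y ∈ X, 1 / 2 * nrm (x - y) ^ 2 ≤ breg ψ gψ x y)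
    (μf μh : ℝ) (hμf : 0 ≤ μf) (hμh : 0 ≤ μh) (hμ0 : μf = 0 ∨ μh = 0)
    (hf_sc : ∀ x ∈ X, ∀ y ∈ X, ∀ g ∈ subgrad X f y,
      μf * breg ψ gψ x y ≤ f x - f y - ⟪g, x - y⟫)
    (hh_sc : ∀ x ∈ X, ∀ y ∈ X, ∀ g ∈ subgrad X h y,
      μh * breg ψ gψ x y ≤ h x - h y - ⟪g, x - y⟫)
    (L M : ℝ) (hL : 0 ≤ L) (hM : 0 ≤ M)
    (hsmooth : ∀ x ∈ X, ∀ y ∈ X, ∀ g ∈ subgrad X f y,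
      f x - f y - ⟪g, x - y⟫ ≤ L / 2 * nrm (x - y) ^ 2 + M * nrm (x - y))
    (T : ℕ) (hT : 2 ≤ T)
    (η : ℕ → ℝ) (hη_pos : ∀ t ∈ Finset.Icc 1 T, 0 < η t)
    (hη_le : ∀ t ∈ Finset.Icc 1 T, max (2 * L) μf * η t ≤ 1)
    (γ : ℕ → ℝ)
    (hγ : ∀ t, γ t = η t * ∏ s ∈ Finset.Icc 2 t, (1 + μh * η (s - 1)) / (1 - μf * η s))
    (ghat gsub : ℕ → EuclideanSpace ℝ (Fin d))
    (x : ℕ → EuclideanSpace ℝ (Fin d)) (hx1 : x 1 ∈ X)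
    (hgsub : ∀ t ∈ Finset.Icc 1 T, gsub t ∈ subgrad X f (x t))
    (hupdate : ∀ t ∈ Finset.Icc 1 T, x (t + 1) ∈ X ∧
      IsMinOn (fun u => h u + ⟪ghat t, u - x t⟫ + breg ψ gψ u (x t) / η t) X (x (t + 1)))
    (w : ℕ → ℝ)
    (hw_nonneg : ∀ t ∈ Finset.Icc 1 T, 0 ≤ w t)
    (hw_mono : ∀ s ∈ Finset.Icc 1 T, ∀ t ∈ Finset.Icc 1 T, s ≤ t → w t ≤ w s)
    (v : ℕ → ℝ)
    (hv : ∀ t ≤ T, v t = w T * γ T / ∑ s ∈ Finset.Icc (max t 1) T, w s * γ s)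
    (hv_pos : ∀ t ≤ T, 0 < v t)
    (xpt : EuclideanSpace ℝ (Fin d)) (hxpt : xpt ∈ X)
    (z : ℕ → EuclideanSpace ℝ (Fin d))
    (hz : ∀ t ≤ T, z t =
      (v 0 / v t) • xpt + ∑ s ∈ Finset.Icc 1 t, ((v s - v (s - 1)) / v t) • x s) :
    w T * γ T * v T * ((f (x (T + 1)) + h (x (T + 1))) - (f xpt + h xpt)) ≤
      w 1 * (1 - μf * η 1) * v 0 * breg ψ gψ xpt (x 1)
      + ∑ t ∈ Finset.Icc 1 T,
          2 * w t * γ t * η t * v t * (M ^ 2 + dualNorm nrm (ghat t - gsub t) ^ 2)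
      + ∑ t ∈ Finset.Icc 1 T,
          w t * γ t * v (t - 1) * ⟪ghat t - gsub t, z (t - 1) - x t⟫
      + ∑ t ∈ Finset.Icc 2 T,
          (w t - w (t - 1)) * γ t * ((η t)⁻¹ - μf) * v (t - 1) *
            breg ψ gψ (z (t - 1)) (x t) := by
  classical
  have hT1 : (1:ℕ) ≤ T := le_trans one_le_two hT
  have hmemT : T ∈ Finset.Icc 1 T := Finset.mem_Icc.2 ⟨hT1, le_refl T⟩
  -- step size facts
  have hμfη : ∀ t ∈ Finset.Icc 1 T, μf * η t ≤ 1 := by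
    intro t ht
    exact le_trans (mul_le_mul_of_nonneg_right (le_max_right (2*L) μf) (hη_pos t ht).le) (hη_le t ht)
  have hLη2 : ∀ t ∈ Finset.Icc 1 T, 2 * L * η t ≤ 1 := by
    intro t ht
    exact le_trans (mul_le_mul_of_nonneg_right (le_max_left (2*L) μf) (hη_pos t ht).le) (hη_le t ht)
  -- iterates lie in X
  have hxX : ∀ t, 1 ≤ t → t ≤ T + 1 → x t ∈ X := by
    intro t
    induction t with
    | zero => intro h1 h2; omega
    | succ n _ =>
      intro h1 h2
      rcases Nat.eq_zero_or_pos n with hn | hn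
      · subst hn; exact hx1
      · exact (hupdate n (Finset.mem_Icc.2 ⟨hn, by omega⟩)).1
  -- gamma facts
  have hγ1 : γ 1 = η 1 := by
    rw [hγ 1, Finset.Icc_eq_empty (by omega), Finset.prod_empty, mul_one]
  have hfrac_nonneg : ∀ s ∈ Finset.Icc 2 T, 0 ≤ (1 + μh * η (s-1)) / (1 - μf * η s) := by
    intro s hs
    rw [Finset.mem_Icc] at hs
    have hs1 : s - 1 ∈ Finset.Icc 1 T := Finset.mem_Icc.2 ⟨by omega, by omega⟩
    have hsm : s ∈ Finset.Icc 1 T := Finset.mem_Icc.2 ⟨by omega, hs.2⟩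
    apply div_nonneg
    · nlinarith [hη_pos _ hs1, hμh]
    · linarith [hμfη s hsm]
  have hγ_nonneg : ∀ t ∈ Finset.Icc 1 T, 0 ≤ γ t := by
    intro t ht
    rw [Finset.mem_Icc] at ht
    rw [hγ t]
    apply mul_nonneg (hη_pos t (Finset.mem_Icc.2 ht)).le
    apply Finset.prod_nonneg
    intro s hs
    rw [Finset.mem_Icc] at hs
    exact hfrac_nonneg s (Finset.mem_Icc.2 ⟨hs.1, le_trans hs.2 ht.2⟩)
  have hST : ∑ s ∈ Finset.Icc (max T 1) T, w s * γ s = w T * γ T := by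
    rw [max_eq_left hT1, Finset.Icc_self, Finset.sum_singleton]
  have hvT : v T = w T * γ T / (w T * γ T) := by rw [hv T le_rfl, hST]
  have hW_ne : w T * γ T ≠ 0 := by
    intro h0
    have := hv_pos T le_rfl
    rw [hvT, h0] at this
    norm_num at this
  have hW_pos : 0 < w T * γ T :=
    lt_of_le_of_ne (mul_nonneg (hw_nonneg T hmemT) (hγ_nonneg T hmemT)) (Ne.symm hW_ne)
  have hvT1 : v T = 1 := by rw [hvT]; exact div_self hW_ne
  have hγT_ne : γ T ≠ 0 := (mul_ne_zero_iff.1 hW_ne).2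
  have hwT_pos : 0 < w T :=
    lt_of_le_of_ne (hw_nonneg T hmemT) (Ne.symm (mul_ne_zero_iff.1 hW_ne).1)
  have hden_pos : ∀ s ∈ Finset.Icc 2 T, 0 < 1 - μf * η s := by
    intro s hs
    have hne : 1 - μf * η s ≠ 0 := by
      intro h0
      apply hγT_ne
      rw [hγ T]
      apply mul_eq_zero_of_right
      apply Finset.prod_eq_zero hs
      rw [h0, div_zero]
    have hsm : s ∈ Finset.Icc 1 T := by
      rw [Finset.mem_Icc] at hs ⊢; omega
    have := hμfη s hsm
    rcases lt_or_eq_of_le (by linarith : (0:ℝ) ≤ 1 - μf * η s) with hlt | heq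
    · exact hlt
    · exact absurd heq.symm hne
  have hγ_pos : ∀ t ∈ Finset.Icc 1 T, 0 < γ t := by
    intro t ht
    rw [Finset.mem_Icc] at ht
    rw [hγ t]
    apply mul_pos (hη_pos t (Finset.mem_Icc.2 ht))
    apply Finset.prod_pos
    intro s hs
    rw [Finset.mem_Icc] at hs
    have hsm2 : s ∈ Finset.Icc 2 T := Finset.mem_Icc.2 ⟨hs.1, le_trans hs.2 ht.2⟩
    apply div_pos ?_ (hden_pos s hsm2)
    have hs1 : s - 1 ∈ Finset.Icc 1 T := Finset.mem_Icc.2 ⟨by omega, by omega⟩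
    nlinarith [hη_pos _ hs1, hμh]
  have hw_posT : ∀ t ∈ Finset.Icc 1 T, 0 < w t := fun t ht =>
    lt_of_lt_of_le hwT_pos (hw_mono t ht T hmemT (Finset.mem_Icc.1 ht).2)
  -- sum facts
  have hSeq : ∀ t, t ≤ T → (∑ s ∈ Finset.Icc (max t 1) T, w s * γ s) = w T * γ T / v t := by
    intro t ht
    have hS_ne : (∑ s ∈ Finset.Icc (max t 1) T, w s * γ s) ≠ 0 := by
      intro h0
      have := hv_pos t ht
      rw [hv t ht, h0, div_zero] at this
      exact lt_irrefl _ this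
    rw [eq_div_iff (ne_of_gt (hv_pos t ht))]
    rw [hv t ht]
    field_simp
  have hv01 : v 0 = v 1 := by rw [hv 0 (by omega), hv 1 hT1]; norm_num
  have hSsplit : ∀ t ∈ Finset.Icc 2 T,
      w T * γ T / v (t-1) = w (t-1) * γ (t-1) + w T * γ T / v t := by
    intro t ht
    rw [Finset.mem_Icc] at ht
    rw [← hSeq (t-1) (by omega), ← hSeq t ht.2]
    have e1 : max (t-1) 1 = t-1 := max_eq_left (by omega)
    have e2 : max t 1 = t := max_eq_left (by omega)
    rw [e1, e2]
    have hins : Finset.Icc (t-1) T = insert (t-1) (Finset.Icc t T) := by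
      ext a; simp only [Finset.mem_Icc, Finset.mem_insert]; omega
    rw [hins, Finset.sum_insert (by simp only [Finset.mem_Icc]; omega)]
  have hvmono : ∀ t ∈ Finset.Icc 1 T, v (t-1) ≤ v t := by
    intro t ht
    rw [Finset.mem_Icc] at ht
    rcases eq_or_lt_of_le ht.1 with h | h
    · rw [← h]; norm_num; exact le_of_eq hv01
    · have ht2 : t ∈ Finset.Icc 2 T := Finset.mem_Icc.2 ⟨h, ht.2⟩
      have hs := hSsplit t ht2
      have hwγ : 0 ≤ w (t-1) * γ (t-1) := by
        have hm : t - 1 ∈ Finset.Icc 1 T := Finset.mem_Icc.2 ⟨by omega, by omega⟩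
        exact mul_nonneg (hw_nonneg _ hm) (hγ_nonneg _ hm)
      have hvp1 := hv_pos (t-1) (by omega)
      have hvpt := hv_pos t ht.2
      have hdd : w T * γ T / v t ≤ w T * γ T / v (t-1) := by linarith
      rw [div_le_div_iff₀ hvpt hvp1] at hdd
      exact le_of_mul_le_mul_left (by linarith [hdd]) hW_pos
  -- z machinery
  have hz_combo : ∀ t, t ≤ T → z t = ∑ s ∈ insert 0 (Finset.Icc 1 t),
      (if s = 0 then v 0 / v t else (v s - v (s-1)) / v t) • (if s = 0 then xpt else x s) := by
    intro t ht
    rw [Finset.sum_insert (by simp)]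
    simp only [if_pos rfl]
    rw [hz t ht]
    congr 1
    apply Finset.sum_congr rfl
    intro s hs
    rw [Finset.mem_Icc] at hs
    rw [if_neg (by omega), if_neg (by omega)]
  have htel : ∀ t, (∑ s ∈ Finset.Icc 1 t, (v s - v (s-1))) = v t - v 0 := by
    intro t
    induction t with
    | zero => simp
    | succ n ih =>
      rw [Finset.sum_Icc_succ_top (by omega : 1 ≤ n + 1), ih]
      simp only [Nat.add_sub_cancel]
      ring
  have hc_sum : ∀ t, t ≤ T → (∑ s ∈ insert 0 (Finset.Icc 1 t),
      (if s = 0 then v 0 / v t else (v s - v (s-1)) / v t)) = 1 := by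
    intro t ht
    rw [Finset.sum_insert (by simp), if_pos rfl]
    have e1 : (∑ s ∈ Finset.Icc 1 t, (if s = 0 then v 0 / v t else (v s - v (s-1)) / v t))
        = (∑ s ∈ Finset.Icc 1 t, (v s - v (s-1))) / v t := by
      rw [Finset.sum_div]
      apply Finset.sum_congr rfl
      intro s hs
      rw [Finset.mem_Icc] at hs
      rw [if_neg (by omega)]
    rw [e1, htel t]
    field_simp
    rw [show v 0 + (v t - v 0) = v t by ring]
    exact div_self (ne_of_gt (hv_pos t ht))
  have hc_nonneg : ∀ t, t ≤ T → ∀ s ∈ insert 0 (Finset.Icc 1 t),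
      0 ≤ (if s = 0 then v 0 / v t else (v s - v (s-1)) / v t) := by
    intro t ht s hs
    rcases Finset.mem_insert.1 hs with rfl | hs2
    · rw [if_pos rfl]
      exact div_nonneg (hv_pos 0 (by omega)).le (hv_pos t ht).le
    · rw [Finset.mem_Icc] at hs2
      rw [if_neg (by omega)]
      apply div_nonneg ?_ (hv_pos t ht).le
      have := hvmono s (Finset.mem_Icc.2 ⟨hs2.1, le_trans hs2.2 ht⟩)
      linarith
  have hPmem : ∀ t, t ≤ T → ∀ s ∈ insert 0 (Finset.Icc 1 t),
      (if s = 0 then xpt else x s) ∈ X := by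
    intro t ht s hs
    rcases Finset.mem_insert.1 hs with rfl | hs2
    · rw [if_pos rfl]; exact hxpt
    · rw [Finset.mem_Icc] at hs2
      rw [if_neg (by omega)]
      exact hxX s hs2.1 (by omega)
  have hzX : ∀ t, t ≤ T → z t ∈ X := by
    intro t ht
    rw [hz_combo t ht]
    exact hXcv.sum_mem (hc_nonneg t ht) (hc_sum t ht) (hPmem t ht)
  have hJ : ∀ t, t ≤ T → v t * (f (z t) + h (z t)) ≤
      v 0 * (f xpt + h xpt) + ∑ s ∈ Finset.Icc 1 t, (v s - v (s-1)) * (f (x s) + h (x s)) := by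
    intro t ht
    have hvne : v t ≠ 0 := ne_of_gt (hv_pos t ht)
    have hf2 := hf_cv.map_sum_le (p := fun s => if s = 0 then xpt else x s)
      (hc_nonneg t ht) (hc_sum t ht) (fun s _ => Set.mem_univ _)
    have hh2 := hh_cv.map_sum_le (p := fun s => if s = 0 then xpt else x s)
      (hc_nonneg t ht) (hc_sum t ht) (fun s _ => Set.mem_univ _)
    rw [← hz_combo t ht] at hf2 hh2
    have hsum2 : (∑ s ∈ insert 0 (Finset.Icc 1 t),
          (if s = 0 then v 0 / v t else (v s - v (s-1)) / v t) • f (if s = 0 then xpt else x s))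
        + (∑ s ∈ insert 0 (Finset.Icc 1 t),
          (if s = 0 then v 0 / v t else (v s - v (s-1)) / v t) • h (if s = 0 then xpt else x s))
        = ∑ s ∈ insert 0 (Finset.Icc 1 t),
          (if s = 0 then v 0 / v t else (v s - v (s-1)) / v t)
            * (f (if s = 0 then xpt else x s) + h (if s = 0 then xpt else x s)) := by
      rw [← Finset.sum_add_distrib]
      apply Finset.sum_congr rfl
      intro s _
      simp only [smul_eq_mul]
      ring
    have hcomb : f (z t) + h (z t) ≤ ∑ s ∈ insert 0 (Finset.Icc 1 t),
          (if s = 0 then v 0 / v t else (v s - v (s-1)) / v t)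
            * (f (if s = 0 then xpt else x s) + h (if s = 0 then xpt else x s)) := by
      rw [← hsum2]
      exact add_le_add hf2 hh2
    calc v t * (f (z t) + h (z t))
        ≤ v t * (∑ s ∈ insert 0 (Finset.Icc 1 t),
            (if s = 0 then v 0 / v t else (v s - v (s-1)) / v t)
              * (f (if s = 0 then xpt else x s) + h (if s = 0 then xpt else x s))) :=
          mul_le_mul_of_nonneg_left hcomb (hv_pos t ht).le
      _ = ∑ s ∈ insert 0 (Finset.Icc 1 t), v t *
            ((if s = 0 then v 0 / v t else (v s - v (s-1)) / v t)
              * (f (if s = 0 then xpt else x s) + h (if s = 0 then xpt else x s))) :=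
          Finset.mul_sum _ _ _
      _ = v 0 * (f xpt + h xpt) + ∑ s ∈ Finset.Icc 1 t, (v s - v (s-1)) * (f (x s) + h (x s)) := by
          rw [Finset.sum_insert (by simp)]
          congr 1
          · rw [if_pos rfl, if_pos rfl]
            field_simp
          · apply Finset.sum_congr rfl
            intro s hs
            rw [Finset.mem_Icc] at hs
            rw [if_neg (by omega), if_neg (by omega)]
            field_simp
  have hzsmul : ∀ u, u ≤ T → v u • z u = v 0 • xpt + ∑ s ∈ Finset.Icc 1 u, (v s - v (s-1)) • x s := by
    intro u hu
    rw [hz u hu, smul_add, smul_smul, Finset.smul_sum]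
    have hvne : v u ≠ 0 := ne_of_gt (hv_pos u hu)
    congr 1
    · congr 1
      field_simp
    · apply Finset.sum_congr rfl
      intro s _
      rw [smul_smul]
      congr 1
      field_simp
  have hzrec : ∀ t ∈ Finset.Icc 1 T, v t • z t = v (t-1) • z (t-1) + (v t - v (t-1)) • x t := by
    intro t ht
    rw [Finset.mem_Icc] at ht
    obtain ⟨m, rfl⟩ : ∃ m, t = m + 1 := ⟨t - 1, by omega⟩
    rw [hzsmul (m+1) ht.2, hzsmul ((m+1)-1) (by omega)]
    simp only [Nat.add_sub_cancel]
    rw [Finset.sum_Icc_succ_top (by omega : 1 ≤ m + 1)]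
    abel
  have hzdiff : ∀ t ∈ Finset.Icc 1 T, v t • (z t - x t) = v (t-1) • (z (t-1) - x t) := by
    intro t ht
    have := hzrec t ht
    calc v t • (z t - x t) = v t • z t - v t • x t := by module
      _ = (v (t-1) • z (t-1) + (v t - v (t-1)) • x t) - v t • x t := by rw [this]
      _ = v (t-1) • (z (t-1) - x t) := by module
  have hIeq : ∀ t ∈ Finset.Icc 1 T,
      w t * γ t * v t * ⟪ghat t - gsub t, z t - x t⟫
        = w t * γ t * v (t-1) * ⟪ghat t - gsub t, z (t-1) - x t⟫ := by
    intro t ht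
    have h2 : ⟪ghat t - gsub t, v t • (z t - x t)⟫ = ⟪ghat t - gsub t, v (t-1) • (z (t-1) - x t)⟫ := by
      rw [hzdiff t ht]
    rw [real_inner_smul_right, real_inner_smul_right] at h2
    calc w t * γ t * v t * ⟪ghat t - gsub t, z t - x t⟫
        = w t * γ t * (v t * ⟪ghat t - gsub t, z t - x t⟫) := by ring
      _ = w t * γ t * (v (t-1) * ⟪ghat t - gsub t, z (t-1) - x t⟫) := by rw [h2]
      _ = w t * γ t * v (t-1) * ⟪ghat t - gsub t, z (t-1) - x t⟫ := by ring
  have hbreg_nonneg : ∀ p ∈ X, ∀ q ∈ X, 0 ≤ breg ψ gψ p q := by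
    intro p hp q hq
    refine le_trans ?_ (hψ_sc p hp q hq)
    positivity
  have hB1 : ∀ t ∈ Finset.Icc 1 T,
      v t * breg ψ gψ (z t) (x t) ≤ v (t-1) * breg ψ gψ (z (t-1)) (x t) := by
    intro t ht
    have htm := Finset.mem_Icc.1 ht
    have hxtX : x t ∈ X := hxX t htm.1 (by omega)
    have hz1 : z (t-1) ∈ X := hzX (t-1) (by omega)
    have hztX : z t ∈ X := hzX t htm.2
    have hα : (0:ℝ) ≤ v (t-1) := (hv_pos (t-1) (by omega)).le
    have hβ : (0:ℝ) ≤ v t - v (t-1) := by linarith [hvmono t ht]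
    have hsum : 0 ≤ v (t-1) * breg ψ gψ (z (t-1)) (z t) + (v t - v (t-1)) * breg ψ gψ (x t) (z t) :=
      add_nonneg (mul_nonneg hα (hbreg_nonneg _ hz1 _ hztX)) (mul_nonneg hβ (hbreg_nonneg _ hxtX _ hztX))
    have hvec0 : v (t-1) • (z (t-1) - z t) + (v t - v (t-1)) • (x t - z t) = 0 := by
      calc v (t-1) • (z (t-1) - z t) + (v t - v (t-1)) • (x t - z t)
          = (v (t-1) • z (t-1) + (v t - v (t-1)) • x t) - v t • z t := by module
        _ = v t • z t - v t • z t := by rw [← hzrec t ht]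
        _ = 0 := sub_self _
    have hip : v (t-1) * ⟪gψ (z t), z (t-1) - z t⟫ + (v t - v (t-1)) * ⟪gψ (z t), x t - z t⟫ = 0 := by
      rw [← real_inner_smul_right, ← real_inner_smul_right, ← inner_add_right, hvec0, inner_zero_right]
    have hipx : v t * ⟪gψ (x t), z t - x t⟫ = v (t-1) * ⟪gψ (x t), z (t-1) - x t⟫ := by
      rw [← real_inner_smul_right, hzdiff t ht, real_inner_smul_right]
    simp only [breg] at hsum ⊢
    linarith [hsum, hip, hipx]
  -- gamma recursion
  have hγrec : ∀ t ∈ Finset.Icc 2 T, γ t * ((η t)⁻¹ - μf) = γ (t-1) * ((η (t-1))⁻¹ + μh) := by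
    intro t ht
    have htm := Finset.mem_Icc.1 ht
    obtain ⟨m, rfl⟩ : ∃ m, t = m + 2 := ⟨t - 2, by omega⟩
    have e1 : (∏ s ∈ Finset.Icc 2 (m+2), (1 + μh * η (s-1)) / (1 - μf * η s))
        = (∏ s ∈ Finset.Icc 2 (m+1), (1 + μh * η (s-1)) / (1 - μf * η s))
          * ((1 + μh * η (m+1)) / (1 - μf * η (m+2))) :=
      Finset.prod_Icc_succ_top (by omega) _
    show γ (m+2) * ((η (m+2))⁻¹ - μf) = γ (m+1) * ((η (m+1))⁻¹ + μh)
    have hη2 : η (m+2) ≠ 0 := ne_of_gt (hη_pos (m+2) (Finset.mem_Icc.2 ⟨by omega, htm.2⟩))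
    have hη1 : η (m+1) ≠ 0 := ne_of_gt (hη_pos (m+1) (Finset.mem_Icc.2 ⟨by omega, by omega⟩))
    have hd : 1 - μf * η (m+2) ≠ 0 := ne_of_gt (hden_pos (m+2) ht)
    obtain ⟨Q, hQ⟩ : ∃ Q, (∏ s ∈ Finset.Icc 2 (m+1), (1 + μh * η (s-1)) / (1 - μf * η s)) = Q :=
      ⟨_, rfl⟩
    rw [hγ (m+2), hγ (m+1), e1, hQ]
    have e2 : η (m+2) * ((η (m+2))⁻¹ - μf) = 1 - μf * η (m+2) := by
      rw [mul_sub, mul_inv_cancel₀ hη2]; ring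
    have e3 : η (m+1) * ((η (m+1))⁻¹ + μh) = 1 + μh * η (m+1) := by
      rw [mul_add, mul_inv_cancel₀ hη1]; ring
    have e4 : (1 + μh * η (m+1)) / (1 - μf * η (m+2)) * (1 - μf * η (m+2)) = 1 + μh * η (m+1) :=
      div_mul_cancel₀ _ hd
    linear_combination Q * ((1 + μh * η (m+1)) / (1 - μf * η (m+2))) * e2 + Q * e4 - Q * e3
  -- the per-step key inequality
  have key : ∀ t ∈ Finset.Icc 1 T,
      w t * γ t * v t * (f (x (t+1)) + h (x (t+1)))
        ≤ w t * γ t * v 0 * (f xpt + h xpt)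
          + w t * γ t * (∑ s ∈ Finset.Icc 1 t, (v s - v (s-1)) * (f (x s) + h (x s)))
          + (w t * γ t * v t * ((η t)⁻¹ - μf) * breg ψ gψ (z t) (x t)
             - w t * γ t * v t * ((η t)⁻¹ + μh) * breg ψ gψ (z t) (x (t+1)))
          + 2 * w t * γ t * η t * v t * (M ^ 2 + dualNorm nrm (ghat t - gsub t) ^ 2)
          + w t * γ t * v (t-1) * ⟪ghat t - gsub t, z (t-1) - x t⟫ := by
    intro t ht
    obtain ⟨h1t, h2t⟩ := Finset.mem_Icc.1 ht
    have hstep := per_step hXcv hh_cv nrm hnrm_nonneg hnrm_zero hnrm_smul hnrm_tri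
      hψ_diff hψ_sc hf_sc hh_sc L M hM hsmooth (ghat t) (gsub t) (x t) (x (t+1)) (η t)
      (hη_pos t ht) (hLη2 t ht) (hxX t h1t (by omega)) (hxX (t+1) (by omega) (by omega))
      (hgsub t ht) (hupdate t ht).2 (z t) (hzX t h2t)
    have hm : (0:ℝ) ≤ w t * γ t * v t :=
      mul_nonneg (mul_nonneg (hw_nonneg t ht) (hγ_nonneg t ht)) (hv_pos t h2t).le
    have hmul := mul_le_mul_of_nonneg_left hstep hm
    have hJt := mul_le_mul_of_nonneg_left (hJ t h2t)
      (mul_nonneg (hw_nonneg t ht) (hγ_nonneg t ht))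
    have hI := hIeq t ht
    linarith [hmul, hJt, hI]
  -- final assembly
  have hsumkey := Finset.sum_le_sum key
  have E1 : ∑ t ∈ Finset.Icc 1 T, w t * γ t * v t * (f (x (t+1)) + h (x (t+1)))
      = (∑ t ∈ Finset.Icc 2 T, w (t-1) * γ (t-1) * v (t-1) * (f (x t) + h (x t)))
        + w T * γ T * v T * (f (x (T+1)) + h (x (T+1))) := by
    have hmap : ∑ t ∈ Finset.Icc 2 (T+1), w (t-1) * γ (t-1) * v (t-1) * (f (x t) + h (x t))
        = ∑ t ∈ Finset.Icc 1 T, w t * γ t * v t * (f (x (t+1)) + h (x (t+1))) := by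
      rw [show Finset.Icc 2 (T+1) = (Finset.Icc 1 T).map (addRightEmbedding 1) from
        (Finset.map_add_right_Icc 1 T 1).symm, Finset.sum_map]
      apply Finset.sum_congr rfl
      intro t _
      simp [addRightEmbedding_apply]
    rw [← hmap, Finset.sum_Icc_succ_top (show 2 ≤ T+1 by omega)]
    simp only [Nat.add_sub_cancel]
  have E2 : ∑ t ∈ Finset.Icc 1 T, w t * γ t * v 0 * (f xpt + h xpt)
      = w T * γ T * (f xpt + h xpt) := by
    have hKsum : ∑ t ∈ Finset.Icc 1 T, w t * γ t = w T * γ T / v 1 := by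
      have := hSeq 1 hT1
      simpa using this
    have hv1ne : v 1 ≠ 0 := ne_of_gt (hv_pos 1 hT1)
    calc ∑ t ∈ Finset.Icc 1 T, w t * γ t * v 0 * (f xpt + h xpt)
        = (∑ t ∈ Finset.Icc 1 T, w t * γ t) * (v 0 * (f xpt + h xpt)) := by
          rw [Finset.sum_mul]; apply Finset.sum_congr rfl; intro t _; ring
      _ = w T * γ T * (f xpt + h xpt) := by
          rw [hKsum, hv01]
          field_simp
  have E3 : ∑ t ∈ Finset.Icc 1 T,
        w t * γ t * (∑ s ∈ Finset.Icc 1 t, (v s - v (s-1)) * (f (x s) + h (x s)))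
      = ∑ s ∈ Finset.Icc 2 T, w (s-1) * γ (s-1) * v (s-1) * (f (x s) + h (x s)) := by
    have h1 : ∀ t ∈ Finset.Icc 1 T,
        w t * γ t * (∑ s ∈ Finset.Icc 1 t, (v s - v (s-1)) * (f (x s) + h (x s)))
        = ∑ s ∈ Finset.Icc 1 t, w t * γ t * ((v s - v (s-1)) * (f (x s) + h (x s))) :=
      fun t _ => Finset.mul_sum _ _ _
    rw [Finset.sum_congr rfl h1]
    rw [Finset.sum_comm' (t' := Finset.Icc 1 T) (s' := fun s => Finset.Icc s T)
      (fun a b => by simp only [Finset.mem_Icc]; omega)]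
    have h2 : ∀ s ∈ Finset.Icc 1 T,
        (∑ t ∈ Finset.Icc s T, w t * γ t * ((v s - v (s-1)) * (f (x s) + h (x s))))
        = (w T * γ T / v s) * ((v s - v (s-1)) * (f (x s) + h (x s))) := by
      intro s hs
      rw [← Finset.sum_mul]
      congr 1
      have := hSeq s (Finset.mem_Icc.1 hs).2
      rwa [max_eq_left (Finset.mem_Icc.1 hs).1] at this
    rw [Finset.sum_congr rfl h2]
    rw [show Finset.Icc 1 T = insert 1 (Finset.Icc 2 T) from by
      ext a; simp only [Finset.mem_Icc, Finset.mem_insert]; omega]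
    rw [Finset.sum_insert (by simp [Finset.mem_Icc])]
    have hzero : (w T * γ T / v 1) * ((v 1 - v 0) * (f (x 1) + h (x 1))) = 0 := by
      rw [hv01, sub_self, zero_mul, mul_zero]
    rw [hzero, zero_add]
    apply Finset.sum_congr rfl
    intro s hs
    have hsm := Finset.mem_Icc.1 hs
    have e := hSsplit s hs
    have hv1 : v (s-1) ≠ 0 := ne_of_gt (hv_pos (s-1) (by omega))
    have hv2 : v s ≠ 0 := ne_of_gt (hv_pos s hsm.2)
    have ew : w (s-1) * γ (s-1) = w T * γ T / v (s-1) - w T * γ T / v s := by linarith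
    rw [ew]
    field_simp
  have hz0 : z 0 = xpt := by
    rw [hz 0 (by omega), Finset.Icc_eq_empty (by omega), Finset.sum_empty, add_zero,
      div_self (ne_of_gt (hv_pos 0 (by omega))), one_smul]
  have ha_nonneg : ∀ t ∈ Finset.Icc 1 T, 0 ≤ (η t)⁻¹ - μf := by
    intro t ht
    have h1 := hμfη t ht
    have h2 := hη_pos t ht
    rw [sub_nonneg, show (η t)⁻¹ = 1 / η t from (one_div (η t)).symm, le_div_iff₀ h2]
    linarith
  have E4 : ∑ t ∈ Finset.Icc 1 T,
        (w t * γ t * v t * ((η t)⁻¹ - μf) * breg ψ gψ (z t) (x t)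
         - w t * γ t * v t * ((η t)⁻¹ + μh) * breg ψ gψ (z t) (x (t+1)))
      ≤ w 1 * (1 - μf * η 1) * v 0 * breg ψ gψ xpt (x 1)
        + ∑ t ∈ Finset.Icc 2 T,
            (w t - w (t - 1)) * γ t * ((η t)⁻¹ - μf) * v (t - 1) *
              breg ψ gψ (z (t - 1)) (x t) := by
    have hQle : ∀ t ∈ Finset.Icc 1 T,
        w t * γ t * v t * ((η t)⁻¹ - μf) * breg ψ gψ (z t) (x t)
          - w t * γ t * v t * ((η t)⁻¹ + μh) * breg ψ gψ (z t) (x (t+1))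
        ≤ w t * γ t * ((η t)⁻¹ - μf) * (v (t-1) * breg ψ gψ (z (t-1)) (x t))
          - w t * γ t * v t * ((η t)⁻¹ + μh) * breg ψ gψ (z t) (x (t+1)) := by
      intro t ht
      have hnn : (0:ℝ) ≤ w t * γ t * ((η t)⁻¹ - μf) :=
        mul_nonneg (mul_nonneg (hw_nonneg t ht) (hγ_nonneg t ht)) (ha_nonneg t ht)
      have h2 := mul_le_mul_of_nonneg_left (hB1 t ht) hnn
      linarith only [h2]
    have s1 := Finset.sum_le_sum hQle
    refine le_trans s1 ?_
    rw [Finset.sum_sub_distrib]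
    -- split Q sum
    rw [show Finset.Icc 1 T = insert 1 (Finset.Icc 2 T) from by
      ext a; simp only [Finset.mem_Icc, Finset.mem_insert]; omega]
    rw [Finset.sum_insert (by simp [Finset.mem_Icc])]
    -- split N sum : over insert T (Icc 1 (T-1))
    have hNsplit : ∑ t ∈ insert 1 (Finset.Icc 2 T),
        w t * γ t * v t * ((η t)⁻¹ + μh) * breg ψ gψ (z t) (x (t+1))
        = (∑ t ∈ Finset.Icc 1 (T-1), w t * γ t * v t * ((η t)⁻¹ + μh) * breg ψ gψ (z t) (x (t+1)))
          + w T * γ T * v T * ((η T)⁻¹ + μh) * breg ψ gψ (z T) (x (T+1)) := by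
      rw [show insert 1 (Finset.Icc 2 T) = insert T (Finset.Icc 1 (T-1)) from by
        ext a; simp only [Finset.mem_Icc, Finset.mem_insert]; omega]
      rw [Finset.sum_insert (by simp only [Finset.mem_Icc]; omega)]
      ring
    rw [hNsplit]
    have hNmap : ∑ t ∈ Finset.Icc 1 (T-1),
        w t * γ t * v t * ((η t)⁻¹ + μh) * breg ψ gψ (z t) (x (t+1))
        = ∑ t ∈ Finset.Icc 2 T,
            w (t-1) * γ (t-1) * v (t-1) * ((η (t-1))⁻¹ + μh) * breg ψ gψ (z (t-1)) (x t) := by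
      rw [show Finset.Icc 2 T = (Finset.Icc 1 (T-1)).map (addRightEmbedding 1) from by
        rw [Finset.map_add_right_Icc]; congr 1; omega, Finset.sum_map]
      apply Finset.sum_congr rfl
      intro t _
      simp [addRightEmbedding_apply]
    rw [hNmap]
    have hQ1 : w 1 * γ 1 * ((η 1)⁻¹ - μf) * (v 0 * breg ψ gψ (z 0) (x 1))
        = w 1 * (1 - μf * η 1) * v 0 * breg ψ gψ xpt (x 1) := by
      rw [hz0, hγ1]
      have hη1 : η 1 ≠ 0 := ne_of_gt (hη_pos 1 (Finset.mem_Icc.2 ⟨le_refl 1, hT1⟩))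
      field_simp
    have hNT : 0 ≤ w T * γ T * v T * ((η T)⁻¹ + μh) * breg ψ gψ (z T) (x (T+1)) := by
      apply mul_nonneg
      apply mul_nonneg
      apply mul_nonneg
      apply mul_nonneg (hw_nonneg T hmemT) (hγ_nonneg T hmemT)
      exact (hv_pos T le_rfl).le
      · have h1 : (0:ℝ) ≤ (η T)⁻¹ := (inv_pos.2 (hη_pos T hmemT)).le
        linarith
      · exact hbreg_nonneg _ (hzX T le_rfl) _ (hxX (T+1) (by omega) (by omega))
    have hcomb : ∀ t ∈ Finset.Icc 2 T,
        w t * γ t * ((η t)⁻¹ - μf) * (v (t-1) * breg ψ gψ (z (t-1)) (x t))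
          - w (t-1) * γ (t-1) * v (t-1) * ((η (t-1))⁻¹ + μh) * breg ψ gψ (z (t-1)) (x t)
        = (w t - w (t - 1)) * γ t * ((η t)⁻¹ - μf) * v (t - 1) *
            breg ψ gψ (z (t - 1)) (x t) := by
      intro t ht
      have := hγrec t ht
      linear_combination (w (t-1) * (v (t-1) * breg ψ gψ (z (t-1)) (x t))) * this
    calc w 1 * γ 1 * ((η 1)⁻¹ - μf) * (v 0 * breg ψ gψ (z 0) (x 1))
          + ∑ t ∈ Finset.Icc 2 T, w t * γ t * ((η t)⁻¹ - μf) * (v (t-1) * breg ψ gψ (z (t-1)) (x t))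
          - ((∑ t ∈ Finset.Icc 2 T,
              w (t-1) * γ (t-1) * v (t-1) * ((η (t-1))⁻¹ + μh) * breg ψ gψ (z (t-1)) (x t))
            + w T * γ T * v T * ((η T)⁻¹ + μh) * breg ψ gψ (z T) (x (T+1)))
        ≤ w 1 * γ 1 * ((η 1)⁻¹ - μf) * (v 0 * breg ψ gψ (z 0) (x 1))
          + ((∑ t ∈ Finset.Icc 2 T, w t * γ t * ((η t)⁻¹ - μf) * (v (t-1) * breg ψ gψ (z (t-1)) (x t)))
            - ∑ t ∈ Finset.Icc 2 T,
              w (t-1) * γ (t-1) * v (t-1) * ((η (t-1))⁻¹ + μh) * breg ψ gψ (z (t-1)) (x t)) := by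
          linarith [hNT]
      _ = w 1 * (1 - μf * η 1) * v 0 * breg ψ gψ xpt (x 1)
          + ∑ t ∈ Finset.Icc 2 T,
              (w t - w (t - 1)) * γ t * ((η t)⁻¹ - μf) * v (t - 1) *
                breg ψ gψ (z (t - 1)) (x t) := by
          rw [hQ1, ← Finset.sum_sub_distrib, Finset.sum_congr rfl hcomb]
  -- conclude
  simp only [Finset.sum_add_distrib] at hsumkey
  rw [E1, E2, E3] at hsumkey
  rw [hvT1] at hsumkey ⊢
  linarith [hsumkey, E4]
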